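/- The Demazure–Lusztig operators $H_i(\xi) = v^{-1}s_i(\xi) + (v^{-1}-v)\,x_i\frac{\xi - s_i(\xi)}{x_i - x_{i+1}}$ on $\mathbb{Z}[v,v^{-1}][x_1^{\pm1},\ldots,x_n^{\pm1}]$ satisfy the quadratic relation $(H_i + v)(H_i - v^{-1}) = 0$ and the braid relations $H_i H_{i+1} H_i = H_{i+1} H_i H_{i+1}$ and $H_i H_j = H_j H_i$ for $|i-j| \ge 2$. -/

import Mathlib

open LaurentPolynomial

/-- The coefficient ring `𝓛 = ℤ[v, v⁻¹]`. -/
abbrev LL : Type := LaurentPolynomial ℤ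

/-- Laurent polynomials `𝓛[x₁^{±1}, …, x_N^{±1}]`. -/
abbrev LP (N : ℕ) : Type := AddMonoidAlgebra LL (Fin N →₀ ℤ)

namespace LP

variable {N : ℕ}

/-- The variable `x_j`. -/
noncomputable def Xv (j : Fin N) : LP N :=
  AddMonoidAlgebra.single (Finsupp.single j 1) 1

/-- The action of a permutation `σ ∈ S_N` on Laurent polynomials by permuting
the variables: `x^τ ↦ x^{σ(τ)}`. -/
noncomputable def permAct (σ : Equiv.Perm (Fin N)) : LP N →+* LP N :=
  AddMonoidAlgebra.mapDomainRingHom LL (Finsupp.mapDomain.addMonoidHom σ)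

/-- The monomial `x^τ`. -/
noncomputable def mono (τ : Fin N → ℤ) : LP N :=
  AddMonoidAlgebra.single (Finsupp.equivFunOnFinite.symm τ) 1

/-- A family `H i` of `𝓛`-linear operators is a family of Demazure–Lusztig
operators if it satisfies, after clearing the denominator `x_i - x_{i+1}`, the
defining identity
`H_i(ξ) = v⁻¹ s_i(ξ) + (v⁻¹ - v)·x_i·(ξ - s_i ξ)/(x_i - x_{i+1})`. -/
def IsDL {n : ℕ} (H : Fin n → (LP (n + 1) →ₗ[LL] LP (n + 1))) : Prop :=
  ∀ (i : Fin n) (ξ : LP (n + 1)),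
    (Xv i.castSucc - Xv i.succ) * H i ξ =
      (T (-1) : LL) • ((Xv i.castSucc - Xv i.succ) *
        permAct (Equiv.swap i.castSucc i.succ) ξ) +
      ((T (-1) - T 1 : LL)) • (Xv i.castSucc *
        (ξ - permAct (Equiv.swap i.castSucc i.succ) ξ))

end LP

-- ===================== auxiliary infrastructure =====================

namespace LP

variable {N : ℕ}

lemma permAct_apply (σ : Equiv.Perm (Fin N)) (p : LP N) :
    permAct σ p = AddMonoidAlgebra.mapDomain (Finsupp.mapDomain (⇑σ)) p := by
  rfl

lemma permAct_smul (σ : Equiv.Perm (Fin N)) (c : LL) (p : LP N) :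
    permAct σ (c • p) = c • permAct σ p := by
  rw [permAct_apply, permAct_apply]
  apply AddMonoidAlgebra.coeff_injective
  exact Finsupp.mapDomain_smul c p.coeff

lemma permAct_permAct (σ τ : Equiv.Perm (Fin N)) (p : LP N) :
    permAct σ (permAct τ p) = permAct (σ * τ) p := by
  simp only [permAct_apply]
  apply AddMonoidAlgebra.coeff_injective
  change Finsupp.mapDomain (Finsupp.mapDomain (⇑σ)) (Finsupp.mapDomain (Finsupp.mapDomain (⇑τ)) p.coeff) =
    Finsupp.mapDomain (Finsupp.mapDomain (⇑(σ * τ))) p.coeff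
  rw [← Finsupp.mapDomain_comp]
  congr 1
  funext μ
  rw [Function.comp_apply, ← Finsupp.mapDomain_comp]
  rfl

lemma permAct_one (p : LP N) : permAct 1 p = p := by
  rw [permAct_apply]
  have : Finsupp.mapDomain (⇑(1 : Equiv.Perm (Fin N))) = (id : (Fin N →₀ ℤ) → _) := by
    funext μ
    simp [Equiv.Perm.coe_one]
  rw [this]
  apply AddMonoidAlgebra.coeff_injective
  exact Finsupp.mapDomain_id

lemma permAct_Xv (σ : Equiv.Perm (Fin N)) (j : Fin N) :
    permAct σ (Xv j) = Xv (σ j) := by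
  rw [permAct_apply, Xv, Xv]
  rw [AddMonoidAlgebra.mapDomain_single, Finsupp.mapDomain_single]

lemma Xv_sub_ne_zero {a b : Fin N} (h : a ≠ b) : Xv a - Xv b ≠ 0 := by
  intro hab
  rw [sub_eq_zero, Xv, Xv] at hab
  have := (AddMonoidAlgebra.single_left_inj (one_ne_zero (α := LL))).mp hab
  exact h ((Finsupp.single_left_inj (one_ne_zero (α := ℤ))).mp this)

end LP

section Core

variable {R : Type*} [CommRing R]

lemma quad_core (A B x y p ps u1 su1 u7 : R)
    (hAB : A * (A - B) = 1)
    (h1 : (x - y) * u1 = A * ((x - y) * ps) + B * (x * (p - ps)))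
    (hs1 : (y - x) * su1 = A * ((y - x) * p) + B * (y * (ps - p)))
    (h7 : (x - y) * u7 = A * ((x - y) * su1) + B * (x * (u1 - su1))) :
    (x - y) * ((x - y) * u7) = (x - y) * ((x - y) * (p + B * u1)) := by
  linear_combination (x-y)*h7 + (B*x + A*y - A*x)*hs1 + B*y*h1 + ((x-y)^2*p)*hAB

lemma braid_core (A B x y z p ps pt pst pts psts u1 su1 tu1 stu1 u2 su2 tu2 tsu2 u3 su3 u4 tu4 u5 u6 : R)
    (h1 : (x - y) * u1 = A * ((x - y) * ps) + B * (x * (p - ps)))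
    (hs1 : (y - x) * su1 = A * ((y - x) * p) + B * (y * (ps - p)))
    (ht1 : (x - z) * tu1 = A * ((x - z) * pts) + B * (x * (pt - pts)))
    (hst1 : (y - z) * stu1 = A * ((y - z) * psts) + B * (y * (pst - psts)))
    (h3 : (y - z) * u3 = A * ((y - z) * tu1) + B * (y * (u1 - tu1)))
    (hs3 : (x - z) * su3 = A * ((x - z) * stu1) + B * (x * (su1 - stu1)))
    (h5 : (x - y) * u5 = A * ((x - y) * su3) + B * (x * (u3 - su3)))
    (h2 : (y - z) * u2 = A * ((y - z) * pt) + B * (y * (p - pt)))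
    (ht2 : (z - y) * tu2 = A * ((z - y) * p) + B * (z * (pt - p)))
    (hs2 : (x - z) * su2 = A * ((x - z) * pst) + B * (x * (ps - pst)))
    (hts2 : (x - y) * tsu2 = A * ((x - y) * psts) + B * (x * (pts - psts)))
    (h4 : (x - y) * u4 = A * ((x - y) * su2) + B * (x * (u2 - su2)))
    (ht4 : (x - z) * tu4 = A * ((x - z) * tsu2) + B * (x * (tu2 - tsu2)))
    (h6 : (y - z) * u6 = A * ((y - z) * tu4) + B * (y * (u4 - tu4))) :
    (x - y) * ((x - y) * ((y - z) * ((y - z) * ((x - z) * u5)))) =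
    (x - y) * ((x - y) * ((y - z) * ((y - z) * ((x - z) * u6)))) := by
  linear_combination (y*z*z*z + (-2)*y*y*z*z + y*y*y*z + (-1)*x*z*z*z + x*y*z*z + x*y*y*z + (-1)*x*y*y*y + x*x*z*z + (-2)*x*x*y*z + x*x*y*y)*h5 +
      ((-1)*y*y*z*z + y*y*y*z + (2)*x*y*z*z + (-1)*x*y*y*z + (-1)*x*y*y*y + (-1)*x*x*z*z + (-1)*x*x*y*z + (2)*x*x*y*y + x*x*x*z + (-1)*x*x*x*y)*h6 +
      (B*x*y*z*z + (-2)*B*x*y*y*z + B*x*y*y*y + (-1)*B*x*x*z*z + (2)*B*x*x*y*z + (-1)*B*x*x*y*y + A*y*y*z*z + (-2)*A*y*y*y*z + A*y*y*y*y + (-2)*A*x*y*z*z + (4)*A*x*y*y*z + (-2)*A*x*y*y*y + A*x*x*z*z + (-2)*A*x*x*y*z + A*x*x*y*y)*hs3 +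
      ((-1)*B*x*y*z*z + B*x*y*y*z + B*x*x*z*z + (-1)*B*x*x*y*y + (-1)*B*x*x*x*z + B*x*x*x*y)*h3 +
      ((-1)*B*y*y*y*z + B*y*y*y*y + (2)*B*x*y*y*z + (-2)*B*x*y*y*y + (-1)*B*x*x*y*z + B*x*x*y*y + (-1)*A*y*y*z*z + (2)*A*y*y*y*z + (-1)*A*y*y*y*y + (2)*A*x*y*z*z + (-4)*A*x*y*y*z + (2)*A*x*y*y*y + (-1)*A*x*x*z*z + (2)*A*x*x*y*z + (-1)*A*x*x*y*y)*ht4 +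
      (B*y*y*z*z + (-1)*B*y*y*y*z + (-1)*B*x*y*z*z + B*x*y*y*y + B*x*x*y*z + (-1)*B*x*x*y*y)*h4 +
      (B*B*x*x*y*z + (-1)*B*B*x*x*y*y + (-1)*B*B*x*x*x*z + B*B*x*x*x*y + A*B*x*y*z*z + (-1)*A*B*x*y*y*y + (-1)*A*B*x*x*z*z + (-2)*A*B*x*x*y*z + (3)*A*B*x*x*y*y + (2)*A*B*x*x*x*z + (-2)*A*B*x*x*x*y + A*A*y*y*z*z + (-1)*A*A*y*y*y*z + (-2)*A*A*x*y*z*z + A*A*x*y*y*z + A*A*x*y*y*y + A*A*x*x*z*z + A*A*x*x*y*z + (-2)*A*A*x*x*y*y + (-1)*A*A*x*x*x*z + A*A*x*x*x*y)*hst1 +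
      ((-1)*B*B*x*y*y*z + B*B*x*y*y*y + B*B*x*x*y*z + (-1)*B*B*x*x*y*y + (-1)*A*B*x*y*z*z + (2)*A*B*x*y*y*z + (-1)*A*B*x*y*y*y + A*B*x*x*z*z + (-2)*A*B*x*x*y*z + A*B*x*x*y*y)*ht1 +
      (B*B*x*x*z*z + (-2)*B*B*x*x*y*z + B*B*x*x*y*y + A*B*x*y*z*z + (-2)*A*B*x*y*y*z + A*B*x*y*y*y + (-1)*A*B*x*x*z*z + (2)*A*B*x*x*y*z + (-1)*A*B*x*x*y*y)*hs1 +
      (B*B*x*y*z*z + (-1)*B*B*x*y*y*z + (-1)*B*B*x*x*y*z + B*B*x*x*y*y)*h1 +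
      ((-1)*B*B*x*y*y*z + B*B*x*y*y*y + B*B*x*x*y*z + (-1)*B*B*x*x*y*y + (-1)*A*B*y*y*z*z + A*B*y*y*y*z + (2)*A*B*x*y*y*z + (-2)*A*B*x*y*y*y + A*B*x*x*z*z + (-3)*A*B*x*x*y*z + (2)*A*B*x*x*y*y + (-1)*A*A*y*z*z*z + (2)*A*A*y*y*z*z + (-1)*A*A*y*y*y*z + A*A*x*z*z*z + (-1)*A*A*x*y*z*z + (-1)*A*A*x*y*y*z + A*A*x*y*y*y + (-1)*A*A*x*x*z*z + (2)*A*A*x*x*y*z + (-1)*A*A*x*x*y*y)*hts2 +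
      (B*B*x*y*y*z + (-1)*B*B*x*y*y*y + (-1)*B*B*x*x*y*z + B*B*x*x*y*y + A*B*y*y*y*z + (-1)*A*B*y*y*y*y + (-2)*A*B*x*y*y*z + (2)*A*B*x*y*y*y + A*B*x*x*y*z + (-1)*A*B*x*x*y*y)*hs2 +
      ((-1)*B*B*x*y*y*y + (2)*B*B*x*x*y*y + (-1)*B*B*x*x*x*y + (-1)*A*B*x*y*y*z + A*B*x*y*y*y + (2)*A*B*x*x*y*z + (-2)*A*B*x*x*y*y + (-1)*A*B*x*x*x*z + A*B*x*x*x*y)*ht2 +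
      ((-1)*B*B*x*y*y*z + B*B*x*x*y*z + B*B*x*x*y*y + (-1)*B*B*x*x*x*y)*h2

lemma comm_core (A B x y z w p ps pt pts u1 tu1 u2 su2 u3 u4 : R)
    (h1 : (x - y) * u1 = A * ((x - y) * ps) + B * (x * (p - ps)))
    (ht1 : (x - y) * tu1 = A * ((x - y) * pts) + B * (x * (pt - pts)))
    (h2 : (z - w) * u2 = A * ((z - w) * pt) + B * (z * (p - pt)))
    (hs2 : (z - w) * su2 = A * ((z - w) * pts) + B * (z * (ps - pts)))
    (h3 : (z - w) * u3 = A * ((z - w) * tu1) + B * (z * (u1 - tu1)))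
    (h4 : (x - y) * u4 = A * ((x - y) * su2) + B * (x * (u2 - su2))) :
    (x - y) * ((z - w) * u4) = (x - y) * ((z - w) * u3) := by
  linear_combination (z-w)*h4 + (y-x)*h3 + ((-1)*B*x + (-1)*A*y + A*x)*hs2 +
    (B*z + A*w + (-1)*A*z)*ht1 + ((-1)*B*z)*h1 + (B*x)*h2

end Core

set_option maxHeartbeats 2000000 in
open LP LaurentPolynomial in
/-- The Demazure–Lusztig operators satisfy the Hecke quadratic relation
`(H_i + v)(H_i - v⁻¹) = 0` and the braid relations
`H_i H_{i+1} H_i = H_{i+1} H_i H_{i+1}` and `H_i H_j = H_j H_i` for `|i-j| ≥ 2`. -/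
theorem demazure_lusztig_relations (n : ℕ)
    (H : Fin n → (LP (n + 1) →ₗ[LL] LP (n + 1))) (hH : IsDL H) :
    (∀ (i : Fin n) (ξ : LP (n + 1)),
      H i (H i ξ) + ((T 1 - T (-1) : LL)) • H i ξ - ξ = 0) ∧
    (∀ i j : Fin n, (i : ℕ) + 1 = (j : ℕ) →
      ∀ ξ, H i (H j (H i ξ)) = H j (H i (H j ξ))) ∧
    (∀ i j : Fin n, (i : ℕ) + 2 ≤ (j : ℕ) →
      ∀ ξ, H i (H j ξ) = H j (H i ξ)) := by
  have hAB' : (T (-1) : LL) * (T (-1) - (T (-1) - T 1)) = 1 := by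
    rw [sub_sub_cancel, ← T_add]
    norm_num
  refine ⟨?_, ?_, ?_⟩
  · -- quadratic relation
    intro i ξ
    set s := Equiv.swap i.castSucc i.succ with hs_def
    have hcm : i.castSucc ≠ i.succ := i.castSucc_lt_succ.ne
    have hss : s * s = 1 := Equiv.swap_mul_self _ _
    have esc : s i.castSucc = i.succ := Equiv.swap_apply_left _ _
    have esm : s i.succ = i.castSucc := Equiv.swap_apply_right _ _
    have h1 := hH i ξ
    have h7 := hH i (H i ξ)
    have hs1 := congrArg (⇑(permAct s)) h1
    simp only [map_mul, map_add, map_sub, permAct_smul, permAct_Xv, permAct_permAct,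
      hss, permAct_one, esc, esm, ← hs_def] at hs1
    simp only [Algebra.smul_def] at h1 hs1 h7 ⊢
    set A := algebraMap LL (LP (n+1)) (T (-1)) with hA_def
    set B := algebraMap LL (LP (n+1)) (T (-1) - T 1) with hB_def
    have hAB : A * (A - B) = 1 := by
      rw [hA_def, hB_def, ← map_sub, ← map_mul, hAB', map_one]
    have h1' : (Xv i.castSucc - Xv i.succ) * (H i ξ) =
        A * ((Xv i.castSucc - Xv i.succ) * permAct s ξ) +
          B * (Xv i.castSucc * (ξ - permAct s ξ)) := by
      linear_combination h1
    have hs1' : (Xv i.succ - Xv i.castSucc) * (permAct s (H i ξ)) =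
        A * ((Xv i.succ - Xv i.castSucc) * ξ) +
          B * (Xv i.succ * (permAct s ξ - ξ)) := by
      linear_combination hs1
    have h7' : (Xv i.castSucc - Xv i.succ) * (H i (H i ξ)) =
        A * ((Xv i.castSucc - Xv i.succ) * permAct s (H i ξ)) +
          B * (Xv i.castSucc * (H i ξ - permAct s (H i ξ))) := by
      linear_combination h7
    have key := quad_core A B (Xv i.castSucc) (Xv i.succ) ξ (permAct s ξ) (H i ξ)
      (permAct s (H i ξ)) (H i (H i ξ)) hAB h1' hs1' h7'
    have hne : Xv i.castSucc - Xv i.succ ≠ (0 : LP (n+1)) := Xv_sub_ne_zero hcm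
    have key2 := mul_left_cancel₀ hne (mul_left_cancel₀ hne key)
    have hBneg : algebraMap LL (LP (n+1)) (T 1 - T (-1)) = -B := by
      rw [hB_def, ← map_neg]
      congr 1
      ring
    rw [hBneg]
    linear_combination key2
  · -- braid relation
    intro i j hij ξ
    have hjc : j.castSucc = i.succ := by
      apply Fin.ext
      simp only [Fin.coe_castSucc, Fin.val_succ]
      omega
    have hcm : i.castSucc ≠ i.succ := i.castSucc_lt_succ.ne
    have hcr : i.castSucc ≠ j.succ := by
      apply Fin.ne_of_val_ne
      simp only [Fin.coe_castSucc, Fin.val_succ]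
      omega
    have hmr : i.succ ≠ j.succ := by
      apply Fin.ne_of_val_ne
      simp only [Fin.val_succ]
      omega
    set s := Equiv.swap i.castSucc i.succ with hs_def
    set t := Equiv.swap i.succ j.succ with ht_def
    have hss : s * s = 1 := Equiv.swap_mul_self _ _
    have htt : t * t = 1 := Equiv.swap_mul_self _ _
    have esc : s i.castSucc = i.succ := Equiv.swap_apply_left _ _
    have esm : s i.succ = i.castSucc := Equiv.swap_apply_right _ _
    have esr : s j.succ = j.succ :=
      Equiv.swap_apply_of_ne_of_ne hcr.symm hmr.symm
    have etc : t i.castSucc = i.castSucc :=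
      Equiv.swap_apply_of_ne_of_ne hcm hcr
    have etm : t i.succ = j.succ := Equiv.swap_apply_left _ _
    have etr : t j.succ = i.succ := Equiv.swap_apply_right _ _
    have e1 : t * s * t = Equiv.swap j.succ i.castSucc := by
      rw [hs_def, ht_def]
      exact Equiv.swap_mul_swap_mul_swap hcm hcr
    have e2 : s * t * s = Equiv.swap i.castSucc j.succ := by
      rw [hs_def, ht_def]
      have h0 := Equiv.swap_mul_swap_mul_swap (x := j.succ) (y := i.succ) (z := i.castSucc)
        hmr.symm hcr.symm
      rwa [Equiv.swap_comm i.succ i.castSucc, Equiv.swap_comm j.succ i.succ] at h0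
    have hw : t * (s * t) = s * (t * s) := by
      rw [← mul_assoc, ← mul_assoc, e1, e2, Equiv.swap_comm]
    have h1 := hH i ξ
    have h2 := hH j ξ
    rw [hjc] at h2
    have h3 := hH j (H i ξ)
    rw [hjc] at h3
    have h4 := hH i (H j ξ)
    have h5 := hH i (H j (H i ξ))
    have h6 := hH j (H i (H j ξ))
    rw [hjc] at h6
    have hs1 := congrArg (⇑(permAct s)) h1
    have ht1 := congrArg (⇑(permAct t)) h1
    simp only [map_mul, map_add, map_sub, permAct_smul, permAct_Xv, permAct_permAct,
      hss, htt, hw, permAct_one, esc, esm, esr, etc, etm, etr, ← hs_def, ← ht_def] at hs1 ht1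
    have hst1 := congrArg (⇑(permAct s)) ht1
    have ht2 := congrArg (⇑(permAct t)) h2
    have hs2 := congrArg (⇑(permAct s)) h2
    simp only [map_mul, map_add, map_sub, permAct_smul, permAct_Xv, permAct_permAct,
      hss, htt, hw, permAct_one, esc, esm, esr, etc, etm, etr, ← hs_def, ← ht_def] at hst1 ht2 hs2
    have hts2 := congrArg (⇑(permAct t)) hs2
    have hs3 := congrArg (⇑(permAct s)) h3
    have ht4 := congrArg (⇑(permAct t)) h4
    simp only [map_mul, map_add, map_sub, permAct_smul, permAct_Xv, permAct_permAct,
      hss, htt, hw, permAct_one, esc, esm, esr, etc, etm, etr, ← hs_def, ← ht_def] at hts2 hs3 ht4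
    simp only [Algebra.smul_def] at h1 h2 h3 h4 h5 h6 hs1 ht1 hst1 ht2 hs2 hts2 hs3 ht4
    set A := algebraMap LL (LP (n+1)) (T (-1)) with hA_def
    set B := algebraMap LL (LP (n+1)) (T (-1) - T 1) with hB_def
    have h1' : (Xv i.castSucc - Xv i.succ) * (H i ξ) =
        A * ((Xv i.castSucc - Xv i.succ) * (permAct s ξ)) +
          B * (Xv i.castSucc * (ξ - permAct s ξ)) := by
      linear_combination h1
    have hs1' : (Xv i.succ - Xv i.castSucc) * (permAct s (H i ξ)) =
        A * ((Xv i.succ - Xv i.castSucc) * ξ) +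
          B * (Xv i.succ * (permAct s ξ - ξ)) := by
      linear_combination hs1
    have ht1' : (Xv i.castSucc - Xv j.succ) * (permAct t (H i ξ)) =
        A * ((Xv i.castSucc - Xv j.succ) * (permAct (t * s) ξ)) +
          B * (Xv i.castSucc * (permAct t ξ - permAct (t * s) ξ)) := by
      linear_combination ht1
    have hst1' : (Xv i.succ - Xv j.succ) * (permAct (s * t) (H i ξ)) =
        A * ((Xv i.succ - Xv j.succ) * (permAct (s * (t * s)) ξ)) +
          B * (Xv i.succ * (permAct (s * t) ξ - permAct (s * (t * s)) ξ)) := by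
      linear_combination hst1
    have h3' : (Xv i.succ - Xv j.succ) * (H j (H i ξ)) =
        A * ((Xv i.succ - Xv j.succ) * (permAct t (H i ξ))) +
          B * (Xv i.succ * (H i ξ - permAct t (H i ξ))) := by
      linear_combination h3
    have hs3' : (Xv i.castSucc - Xv j.succ) * (permAct s (H j (H i ξ))) =
        A * ((Xv i.castSucc - Xv j.succ) * (permAct (s * t) (H i ξ))) +
          B * (Xv i.castSucc * (permAct s (H i ξ) - permAct (s * t) (H i ξ))) := by
      linear_combination hs3
    have h5' : (Xv i.castSucc - Xv i.succ) * (H i (H j (H i ξ))) =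
        A * ((Xv i.castSucc - Xv i.succ) * (permAct s (H j (H i ξ)))) +
          B * (Xv i.castSucc * (H j (H i ξ) - permAct s (H j (H i ξ)))) := by
      linear_combination h5
    have h2' : (Xv i.succ - Xv j.succ) * (H j ξ) =
        A * ((Xv i.succ - Xv j.succ) * (permAct t ξ)) +
          B * (Xv i.succ * (ξ - permAct t ξ)) := by
      linear_combination h2
    have ht2' : (Xv j.succ - Xv i.succ) * (permAct t (H j ξ)) =
        A * ((Xv j.succ - Xv i.succ) * ξ) +
          B * (Xv j.succ * (permAct t ξ - ξ)) := by
      linear_combination ht2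
    have hs2' : (Xv i.castSucc - Xv j.succ) * (permAct s (H j ξ)) =
        A * ((Xv i.castSucc - Xv j.succ) * (permAct (s * t) ξ)) +
          B * (Xv i.castSucc * (permAct s ξ - permAct (s * t) ξ)) := by
      linear_combination hs2
    have hts2' : (Xv i.castSucc - Xv i.succ) * (permAct (t * s) (H j ξ)) =
        A * ((Xv i.castSucc - Xv i.succ) * (permAct (s * (t * s)) ξ)) +
          B * (Xv i.castSucc * (permAct (t * s) ξ - permAct (s * (t * s)) ξ)) := by
      linear_combination hts2
    have h4' : (Xv i.castSucc - Xv i.succ) * (H i (H j ξ)) =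
        A * ((Xv i.castSucc - Xv i.succ) * (permAct s (H j ξ))) +
          B * (Xv i.castSucc * (H j ξ - permAct s (H j ξ))) := by
      linear_combination h4
    have ht4' : (Xv i.castSucc - Xv j.succ) * (permAct t (H i (H j ξ))) =
        A * ((Xv i.castSucc - Xv j.succ) * (permAct (t * s) (H j ξ))) +
          B * (Xv i.castSucc * (permAct t (H j ξ) - permAct (t * s) (H j ξ))) := by
      linear_combination ht4
    have h6' : (Xv i.succ - Xv j.succ) * (H j (H i (H j ξ))) =
        A * ((Xv i.succ - Xv j.succ) * (permAct t (H i (H j ξ)))) +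
          B * (Xv i.succ * (H i (H j ξ) - permAct t (H i (H j ξ)))) := by
      linear_combination h6
    have key := braid_core A B (Xv i.castSucc) (Xv i.succ) (Xv j.succ) ξ
      (permAct s ξ) (permAct t ξ) (permAct (s * t) ξ) (permAct (t * s) ξ)
      (permAct (s * (t * s)) ξ)
      (H i ξ) (permAct s (H i ξ)) (permAct t (H i ξ)) (permAct (s * t) (H i ξ))
      (H j ξ) (permAct s (H j ξ)) (permAct t (H j ξ)) (permAct (t * s) (H j ξ))
      (H j (H i ξ)) (permAct s (H j (H i ξ))) (H i (H j ξ)) (permAct t (H i (H j ξ)))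
      (H i (H j (H i ξ))) (H j (H i (H j ξ)))
      h1' hs1' ht1' hst1' h3' hs3' h5' h2' ht2' hs2' hts2' h4' ht4' h6'
    have hne1 : Xv i.castSucc - Xv i.succ ≠ (0 : LP (n+1)) := Xv_sub_ne_zero hcm
    have hne2 : Xv i.succ - Xv j.succ ≠ (0 : LP (n+1)) := Xv_sub_ne_zero hmr
    have hne3 : Xv i.castSucc - Xv j.succ ≠ (0 : LP (n+1)) := Xv_sub_ne_zero hcr
    exact mul_left_cancel₀ hne3 (mul_left_cancel₀ hne2 (mul_left_cancel₀ hne2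
      (mul_left_cancel₀ hne1 (mul_left_cancel₀ hne1 key))))
  · -- commuting relation
    intro i j hij ξ
    have hcc : i.castSucc ≠ j.castSucc := by
      apply Fin.ne_of_val_ne
      simp only [Fin.coe_castSucc]
      omega
    have hcw : i.castSucc ≠ j.succ := by
      apply Fin.ne_of_val_ne
      simp only [Fin.coe_castSucc, Fin.val_succ]
      omega
    have hmc : i.succ ≠ j.castSucc := by
      apply Fin.ne_of_val_ne
      simp only [Fin.coe_castSucc, Fin.val_succ]
      omega
    have hmw : i.succ ≠ j.succ := by
      apply Fin.ne_of_val_ne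
      simp only [Fin.val_succ]
      omega
    have hcm : i.castSucc ≠ i.succ := i.castSucc_lt_succ.ne
    have hcm' : j.castSucc ≠ j.succ := j.castSucc_lt_succ.ne
    set s := Equiv.swap i.castSucc i.succ with hs_def
    set t := Equiv.swap j.castSucc j.succ with ht_def
    have esc : s i.castSucc = i.succ := Equiv.swap_apply_left _ _
    have esm : s i.succ = i.castSucc := Equiv.swap_apply_right _ _
    have esz : s j.castSucc = j.castSucc := Equiv.swap_apply_of_ne_of_ne hcc.symm hmc.symm
    have esw : s j.succ = j.succ := Equiv.swap_apply_of_ne_of_ne hcw.symm hmw.symm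
    have etz : t j.castSucc = j.succ := Equiv.swap_apply_left _ _
    have etw : t j.succ = j.castSucc := Equiv.swap_apply_right _ _
    have etc : t i.castSucc = i.castSucc := Equiv.swap_apply_of_ne_of_ne hcc hcw
    have etm : t i.succ = i.succ := Equiv.swap_apply_of_ne_of_ne hmc hmw
    have hst : s * t = t * s := by
      have hdisj : (s : Equiv.Perm (Fin (n+1))).Disjoint t := by
        intro a
        by_cases ha1 : a = i.castSucc
        · right
          rw [ha1]
          exact etc
        by_cases ha2 : a = i.succ
        · right
          rw [ha2]
          exact etm
        · left
          exact Equiv.swap_apply_of_ne_of_ne ha1 ha2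
      exact hdisj.commute.eq
    have h1 := hH i ξ
    have h2 := hH j ξ
    have h3 := hH j (H i ξ)
    have h4 := hH i (H j ξ)
    have ht1 := congrArg (⇑(permAct t)) h1
    have hs2 := congrArg (⇑(permAct s)) h2
    simp only [map_mul, map_add, map_sub, permAct_smul, permAct_Xv, permAct_permAct,
      hst, permAct_one, esc, esm, esz, esw, etz, etw, etc, etm, ← hs_def, ← ht_def] at ht1 hs2
    simp only [Algebra.smul_def] at h1 h2 h3 h4 ht1 hs2
    set A := algebraMap LL (LP (n+1)) (T (-1)) with hA_def
    set B := algebraMap LL (LP (n+1)) (T (-1) - T 1) with hB_def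
    have h1' : (Xv i.castSucc - Xv i.succ) * (H i ξ) =
        A * ((Xv i.castSucc - Xv i.succ) * (permAct s ξ)) +
          B * (Xv i.castSucc * (ξ - permAct s ξ)) := by
      linear_combination h1
    have ht1' : (Xv i.castSucc - Xv i.succ) * (permAct t (H i ξ)) =
        A * ((Xv i.castSucc - Xv i.succ) * (permAct (t * s) ξ)) +
          B * (Xv i.castSucc * (permAct t ξ - permAct (t * s) ξ)) := by
      linear_combination ht1
    have h2' : (Xv j.castSucc - Xv j.succ) * (H j ξ) =
        A * ((Xv j.castSucc - Xv j.succ) * (permAct t ξ)) +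
          B * (Xv j.castSucc * (ξ - permAct t ξ)) := by
      linear_combination h2
    have hs2' : (Xv j.castSucc - Xv j.succ) * (permAct s (H j ξ)) =
        A * ((Xv j.castSucc - Xv j.succ) * (permAct (t * s) ξ)) +
          B * (Xv j.castSucc * (permAct s ξ - permAct (t * s) ξ)) := by
      linear_combination hs2
    have h3' : (Xv j.castSucc - Xv j.succ) * (H j (H i ξ)) =
        A * ((Xv j.castSucc - Xv j.succ) * (permAct t (H i ξ))) +
          B * (Xv j.castSucc * (H i ξ - permAct t (H i ξ))) := by
      linear_combination h3
    have h4' : (Xv i.castSucc - Xv i.succ) * (H i (H j ξ)) =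
        A * ((Xv i.castSucc - Xv i.succ) * (permAct s (H j ξ))) +
          B * (Xv i.castSucc * (H j ξ - permAct s (H j ξ))) := by
      linear_combination h4
    have key := comm_core A B (Xv i.castSucc) (Xv i.succ) (Xv j.castSucc) (Xv j.succ) ξ
      (permAct s ξ) (permAct t ξ) (permAct (t * s) ξ)
      (H i ξ) (permAct t (H i ξ)) (H j ξ) (permAct s (H j ξ))
      (H j (H i ξ)) (H i (H j ξ))
      h1' ht1' h2' hs2' h3' h4'
    have hne1 : Xv i.castSucc - Xv i.succ ≠ (0 : LP (n+1)) := Xv_sub_ne_zero hcm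
    have hne2 : Xv j.castSucc - Xv j.succ ≠ (0 : LP (n+1)) := Xv_sub_ne_zero hcm'
    exact mul_left_cancel₀ hne2 (mul_left_cancel₀ hne1 key)
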